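/- For every ε ≥ 1 and every 1 ≤ i ≤ k−ε−1, the Chebyshev–Horner shifts satisfy P_{ε,r}^{i+1}(λ) = 2λ·P_{ε,r}^{i}(λ) − P_{ε−1,r}^{i}(λ) + P_{k−i−1}·φ_ε^{(r)}(λ) identically in λ; moreover, if P_k ≠ 0 then the matrix polynomial P_{ε,r}^{i}(λ) has degree exactly ε + i (some entry has degree ε+i and no entry has larger degree). -/

import Mathlib

open Polynomial Matrix

noncomputable section

/-- `chebP r i` is the `i`-th Chebyshev polynomial of the `r`-th kind (`r ∈ {1,2}`):
`φ_0 = 1`, `φ_1 = X` (first kind) or `2X` (second kind), and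
`φ_{i+2} = 2X φ_{i+1} - φ_i`. -/
def chebP (r : ℕ) : ℕ → Polynomial ℂ
  | 0 => 1
  | 1 => if r = 1 then X else 2 * X
  | (i + 2) => 2 * X * chebP r (i + 1) - chebP r i

/-- The Chebyshev pencil `K^{(C,r)}(λ)` with `rows` block rows, `cols` block columns and
`sz × sz` blocks: row `j` (1-based, `j < rows`) has `I` in column `j`, `-2λ I` in column
`j+1` and `I` in column `j+2`; the last row has `I` in column `rows` and
`-φ_1^{(r)}(λ) I` in column `rows+1`. -/
def KC (r rows cols sz : ℕ) :
    Matrix (Fin rows × Fin sz) (Fin cols × Fin sz) (Polynomial ℂ) :=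
  Matrix.of fun p q =>
    (if (q.1 : ℕ) = (p.1 : ℕ) then 1
      else if (q.1 : ℕ) = (p.1 : ℕ) + 1 then
        (if (p.1 : ℕ) + 1 = rows then -chebP r 1 else -(2 * X))
      else if (q.1 : ℕ) = (p.1 : ℕ) + 2 then 1 else 0) *
    (if p.2 = q.2 then 1 else 0)

/-- `D_1^{(C,r)}(λ)`: block column with `ε+1` blocks whose `i`-th block (1-based) is
`φ_{ε+1-i}^{(r)}(λ) I_n`. -/
def D1C (r ε n : ℕ) : Matrix (Fin (ε + 1) × Fin n) (Fin n) (Polynomial ℂ) :=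
  Matrix.of fun p t => chebP r (ε - (p.1 : ℕ)) * (if p.2 = t then 1 else 0)

/-- `D_2^{(C,r)}(λ)`: block column with `d = k-ε` blocks whose `i`-th block (1-based) is
`φ_{d-i}^{(r)}(λ) I_m`. -/
def D2C (r d m : ℕ) : Matrix (Fin d × Fin m) (Fin m) (Polynomial ℂ) :=
  Matrix.of fun p t => chebP r (d - 1 - (p.1 : ℕ)) * (if p.2 = t then 1 else 0)

/-- The matrix polynomial `P(λ) = Σ_{i=0}^{k} P_i φ_i^{(r)}(λ)` in the Chebyshev basis
of the `r`-th kind. -/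
def PmatC (r k m n : ℕ) (P : ℕ → Matrix (Fin m) (Fin n) ℂ) :
    Matrix (Fin m) (Fin n) (Polynomial ℂ) :=
  ∑ i ∈ Finset.range (k + 1), chebP r i • (P i).map C

/-- The body `M_ε^C(λ)`: `(k-ε) × (ε+1)` block matrix whose first block column is
`2λP_k + P_{k-1}, P_{k-2} - P_k, P_{k-3}, …, P_{ε+1}, P_ε` (top to bottom), whose second
block column is `-P_k, -P_{k-1}, …, -P_{ε+2}, P_{ε-1} - P_{ε+1}` (top to bottom), whose
last block row has `P_{ε-2}, P_{ε-3}, …, P_0` in columns `3, …, ε+1`, and whose other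
blocks are `0` (1-based block indices). -/
def MC (k ε m n : ℕ) (P : ℕ → Matrix (Fin m) (Fin n) ℂ) :
    Matrix (Fin (k - ε) × Fin m) (Fin (ε + 1) × Fin n) (Polynomial ℂ) :=
  Matrix.of fun p q =>
    if (q.1 : ℕ) = 0 then
      (if (p.1 : ℕ) = 0 then 2 * X * C (P k p.2 q.2) + C (P (k - 1) p.2 q.2)
        else if (p.1 : ℕ) = 1 then C (P (k - 2) p.2 q.2) - C (P k p.2 q.2)
        else C (P (k - 1 - (p.1 : ℕ)) p.2 q.2))
    else if (q.1 : ℕ) = 1 then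
      (if (p.1 : ℕ) = k - ε - 1 then C (P (ε - 1) p.2 q.2) - C (P (ε + 1) p.2 q.2)
        else -C (P (k - (p.1 : ℕ)) p.2 q.2))
    else if (p.1 : ℕ) = k - ε - 1 then C (P (ε - (q.1 : ℕ)) p.2 q.2)
    else 0

/-- The colleague Chebyshev pencil
`C_P^{r,ε}(λ) = [[M_ε^C(λ), K_2^{(C,2)}(λ)^T], [K_1^{(C,r)}(λ), 0]]`. -/
def CPre (r k ε m n : ℕ) (P : ℕ → Matrix (Fin m) (Fin n) ℂ) :
    Matrix ((Fin (k - ε) × Fin m) ⊕ (Fin ε × Fin n))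
      ((Fin (ε + 1) × Fin n) ⊕ (Fin (k - 1 - ε) × Fin m)) (Polynomial ℂ) :=
  Matrix.fromBlocks (MC k ε m n P) (KC 2 (k - 1 - ε) (k - ε) m).transpose
    (KC r ε (ε + 1) n) 0

/-- The `i`-th Chebyshev–Horner shift of `P` associated with `e`:
`P_{e,r}^i(λ) = Σ_{j=0}^{i} P_{k-i+j} φ_{e+j}^{(r)}(λ)`. -/
def PHC (r k m n : ℕ) (P : ℕ → Matrix (Fin m) (Fin n) ℂ) (e i : ℕ) :
    Matrix (Fin m) (Fin n) (Polynomial ℂ) :=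
  ∑ j ∈ Finset.range (i + 1), chebP r (e + j) • (P (k - i + j)).map C

lemma chebP_degree (r : ℕ) : ∀ i : ℕ, (chebP r i).degree = (i : WithBot ℕ)
  | 0 => by simp [chebP]
  | 1 => by
      by_cases h : r = 1 <;> simp only [chebP, h, if_true, if_false] <;> compute_degree!
  | (i + 2) => by
      have h1 : (chebP r (i + 1)).degree = ((i + 1 : ℕ) : WithBot ℕ) := chebP_degree r (i + 1)
      have h0 : (chebP r i).degree = (i : WithBot ℕ) := chebP_degree r i
      have h2X : (2 * X : Polynomial ℂ).degree = 1 := by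
        compute_degree!
      have hmul : (2 * X * chebP r (i + 1)).degree = ((i + 2 : ℕ) : WithBot ℕ) := by
        rw [degree_mul, h2X, h1]
        exact_mod_cast (by omega : 1 + (i + 1) = i + 2)
      show (2 * X * chebP r (i + 1) - chebP r i).degree = _
      rw [degree_sub_eq_left_of_degree_lt, hmul]
      rw [hmul, h0]
      exact_mod_cast Nat.lt_add_of_pos_right (by norm_num)

lemma PHC_entry (r k m n : ℕ) (P : ℕ → Matrix (Fin m) (Fin n) ℂ) (e i : ℕ)
    (s : Fin m) (t : Fin n) :
    (PHC r k m n P e i) s t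
      = ∑ j ∈ Finset.range (i + 1), chebP r (e + j) * C (P (k - i + j) s t) := by
  simp [PHC, Matrix.sum_apply, Matrix.smul_apply, Matrix.map_apply, smul_eq_mul]

/-- Chebyshev–Horner recurrence and degree: for every `ε ≥ 1` and `1 ≤ i ≤ k-ε-1`,
`P_{ε,r}^{i+1}(λ) = 2λ P_{ε,r}^i(λ) - P_{ε-1,r}^i(λ) + P_{k-i-1} φ_ε^{(r)}(λ)`
identically in `λ`; moreover, if `P_k ≠ 0` then `P_{ε,r}^i(λ)` has degree exactly
`ε + i` (some entry has degree `ε + i` and no entry has larger degree). -/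
theorem chebyshev_horner_recurrence_and_degree
    (k m n : ℕ) (hk : 2 ≤ k) (hm : 0 < m) (hn : 0 < n)
    (r : ℕ) (hr : r = 1 ∨ r = 2)
    (P : ℕ → Matrix (Fin m) (Fin n) ℂ) :
    ∀ ε : ℕ, 1 ≤ ε → ∀ i : ℕ, 1 ≤ i → i ≤ k - ε - 1 →
      (PHC r k m n P ε (i + 1) =
        ((2 * X : Polynomial ℂ)) • PHC r k m n P ε i - PHC r k m n P (ε - 1) i +
          chebP r ε • (P (k - i - 1)).map C) ∧
      (P k ≠ 0 →
        (∃ s t, ((PHC r k m n P ε i) s t).degree = ((ε + i : ℕ) : WithBot ℕ)) ∧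
        (∀ s t, ((PHC r k m n P ε i) s t).degree ≤ ((ε + i : ℕ) : WithBot ℕ))) := by
  intro ε hε i hi hik'
  obtain ⟨e, rfl⟩ : ∃ e, ε = e + 1 := ⟨ε - 1, by omega⟩
  have hik : i + 1 ≤ k := by omega
  constructor
  · unfold PHC
    rw [Finset.sum_range_succ']
    have h1 : ∀ j ∈ Finset.range (i + 1),
        chebP r (e + 1 + (j + 1)) • (P (k - (i + 1) + (j + 1))).map C
          = (2 * X : Polynomial ℂ) • (chebP r (e + 1 + j) • (P (k - i + j)).map C)
            - chebP r (e + 1 - 1 + j) • (P (k - i + j)).map C := by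
      intro j _
      have h2 : k - (i + 1) + (j + 1) = k - i + j := by omega
      have h3 : e + 1 + (j + 1) = (e + j) + 2 := by ring
      have h4 : e + 1 + j = e + j + 1 := by ring
      have h5 : e + 1 - 1 + j = e + j := by omega
      rw [h2, h3, h4, h5, chebP, sub_smul, smul_smul]
    rw [Finset.sum_congr rfl h1, Finset.sum_sub_distrib]
    have h6 : k - (i + 1) + 0 = k - i - 1 := by omega
    rw [h6, add_zero, ← Finset.smul_sum]
    try abel
  · intro hPk
    have hbound : ∀ (e' : ℕ) (s : Fin m) (t : Fin n),
        ((PHC r k m n P e' i) s t).degree ≤ ((e' + i : ℕ) : WithBot ℕ) := by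
      intro e' s t
      rw [PHC_entry]
      refine (degree_sum_le _ _).trans (Finset.sup_le ?_)
      intro j hj
      refine (degree_mul_le _ _).trans ?_
      rw [chebP_degree]
      calc ((e' + j : ℕ) : WithBot ℕ) + (C (P (k - i + j) s t)).degree
          ≤ ((e' + j : ℕ) : WithBot ℕ) + 0 := add_le_add le_rfl degree_C_le
        _ = ((e' + j : ℕ) : WithBot ℕ) := add_zero _
        _ ≤ ((e' + i : ℕ) : WithBot ℕ) := by
            exact_mod_cast Nat.add_le_add_left (Nat.lt_succ_iff.mp (Finset.mem_range.mp hj)) e'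
    refine ⟨?_, hbound (e + 1)⟩
    obtain ⟨s, t, hst⟩ : ∃ s t, P k s t ≠ 0 := by
      by_contra h
      push_neg at h
      exact hPk (Matrix.ext fun s t => h s t)
    refine ⟨s, t, ?_⟩
    rw [PHC_entry, Finset.sum_range_succ]
    have hki : k - i + i = k := by omega
    have htop : (chebP r (e + 1 + i) * C (P (k - i + i) s t)).degree
        = ((e + 1 + i : ℕ) : WithBot ℕ) := by
      rw [hki, degree_mul, chebP_degree, degree_C hst, add_zero]
    have hrest : (∑ j ∈ Finset.range i, chebP r (e + 1 + j) * C (P (k - i + j) s t)).degree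
        < ((e + 1 + i : ℕ) : WithBot ℕ) := by
      refine lt_of_le_of_lt ((degree_sum_le _ _).trans (Finset.sup_le ?_))
        (show ((e + i : ℕ) : WithBot ℕ) < ((e + 1 + i : ℕ) : WithBot ℕ) by
          exact_mod_cast by omega)
      intro j hj
      have hji : j < i := Finset.mem_range.mp hj
      refine (degree_mul_le _ _).trans ?_
      rw [chebP_degree]
      calc ((e + 1 + j : ℕ) : WithBot ℕ) + (C (P (k - i + j) s t)).degree
          ≤ ((e + 1 + j : ℕ) : WithBot ℕ) + 0 := add_le_add le_rfl degree_C_le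
        _ = ((e + 1 + j : ℕ) : WithBot ℕ) := add_zero _
        _ ≤ ((e + i : ℕ) : WithBot ℕ) := by
            exact_mod_cast (by omega : e + 1 + j ≤ e + i)
    rw [degree_add_eq_right_of_degree_lt (by rw [htop]; exact hrest), htop]
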